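/- Let E be a real normed vector space of finite dimension m ≥ 1, let B = closedBall(c,R) with R > 0, let σ ∈ (0,1], k ≥ 1, and set δ = R·(σ/(8k))^{1/m}. Suppose the requests r_1,…,r_T ∈ B are generated adaptively so that for each t the conditional distribution of r_t given r_1,…,r_{t−1} is (almost surely) σ-smooth with respect to B. Then for every initial configuration c_0 : Fin k → E, the expected optimal offline k-server cost satisfies E[opt_k(r_1,…,r_T; c_0)] ≥ (δ/8)·T − (k·δ)/2, i.e., E[opt] ≥ (R/8)·(σ/(8k))^{1/m}·T − (kR/2)·(σ/(8k))^{1/m}. -/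

import Mathlib

open MeasureTheory Metric

section KSAux

variable {X : Type*} [PseudoMetricSpace X] {k : ℕ}

/-- Position of the "stay-put" schedule that serves request `x t` with server `a t`. -/
def ksPos (p : Fin k → X) (x : ℕ → X) (a : ℕ → Fin k) : ℕ → Fin k → X
  | 0 => p
  | (t+1) => fun i => if a (t+1) = i then x (t+1) else ksPos p x a t i

lemma ksPos_succ (p : Fin k → X) (x : ℕ → X) (a : ℕ → Fin k) (t : ℕ) (i : Fin k) :
    ksPos p x a (t+1) i = if a (t+1) = i then x (t+1) else ksPos p x a t i := rfl

lemma ksPos_serve (p : Fin k → X) (x : ℕ → X) (a : ℕ → Fin k) {t : ℕ} (ht : 1 ≤ t) :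
    ksPos p x a t (a t) = x t := by
  cases t with
  | zero => omega
  | succ n => rw [ksPos_succ, if_pos rfl]

lemma ksPos_eq_of_last (p : Fin k → X) (x : ℕ → X) (a : ℕ → Fin k) {n u : ℕ} {i : Fin k}
    (hu1 : 1 ≤ u) (hun : u ≤ n) (hau : a u = i)
    (hlast : ∀ s, u < s → s ≤ n → a s ≠ i) : ksPos p x a n i = x u := by
  induction n with
  | zero => omega
  | succ n ih =>
      by_cases h : u = n + 1
      · subst h
        rw [ksPos_succ, if_pos hau]
      · have h1 : a (n+1) ≠ i := hlast _ (by omega) le_rfl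
        rw [ksPos_succ, if_neg h1]
        exact ih (by omega) (fun s hs hsn => hlast s hs (by omega))

/-- Cost of the stay-put schedule. -/
def ksCost (p : Fin k → X) (x : ℕ → X) (a : ℕ → Fin k) (T : ℕ) : ℝ :=
  ∑ t ∈ Finset.Icc 1 T, ∑ i, dist (ksPos p x a (t-1) i) (ksPos p x a t i)

lemma ksCost_eq (p : Fin k → X) (x : ℕ → X) (a : ℕ → Fin k) (T : ℕ) :
    ksCost p x a T = ∑ t ∈ Finset.Icc 1 T, dist (ksPos p x a (t-1) (a t)) (x t) := by
  refine Finset.sum_congr rfl fun t ht => ?_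
  rw [Finset.mem_Icc] at ht
  obtain ⟨n, rfl⟩ : ∃ n, t = n + 1 := ⟨t - 1, by omega⟩
  rw [Finset.sum_eq_single (a (n+1))]
  · rw [ksPos_serve p x a (by omega : 1 ≤ n + 1)]
  · intro i _ hi
    rw [ksPos_succ, if_neg (fun h => hi h.symm)]
    simp
  · intro h; exact absurd (Finset.mem_univ _) h

lemma ksCost_nonneg (p : Fin k → X) (x : ℕ → X) (a : ℕ → Fin k) (T : ℕ) :
    0 ≤ ksCost p x a T :=
  Finset.sum_nonneg fun _ _ => Finset.sum_nonneg fun _ _ => dist_nonneg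

/-- The stay-put schedule is optimal among schedules serving via assignment `a`. -/
lemma ksCost_le (p : Fin k → X) (x : ℕ → X) (a : ℕ → Fin k) (T : ℕ)
    (cfg : ℕ → Fin k → X) (h0 : cfg 0 = p)
    (hserve : ∀ t ∈ Finset.Icc 1 T, cfg t (a t) = x t) :
    ksCost p x a T ≤ ∑ t ∈ Finset.Icc 1 T, ∑ i, dist (cfg (t-1) i) (cfg t i) := by
  have key : ∀ n, n ≤ T →
      (∑ i, dist (ksPos p x a n i) (cfg n i)) +
        ∑ t ∈ Finset.Icc 1 n, ∑ i, dist (ksPos p x a (t-1) i) (ksPos p x a t i) ≤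
        ∑ t ∈ Finset.Icc 1 n, ∑ i, dist (cfg (t-1) i) (cfg t i) := by
    intro n
    induction n with
    | zero => intro _; simp [ksPos, h0]
    | succ n ih =>
        intro hn
        have hn' : n ≤ T := by omega
        have hse : cfg (n+1) (a (n+1)) = x (n+1) :=
          hserve _ (Finset.mem_Icc.mpr ⟨by omega, hn⟩)
        have per : ∀ i, dist (ksPos p x a (n+1) i) (cfg (n+1) i)
            + dist (ksPos p x a n i) (ksPos p x a (n+1) i)
            ≤ dist (ksPos p x a n i) (cfg n i) + dist (cfg n i) (cfg (n+1) i) := by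
          intro i
          by_cases hi : a (n+1) = i
          · subst hi
            have tri := dist_triangle (ksPos p x a n (a (n+1))) (cfg n (a (n+1)))
              (cfg (n+1) (a (n+1)))
            rw [hse] at tri
            rw [ksPos_succ, if_pos rfl, hse, dist_self]
            linarith
          · rw [ksPos_succ, if_neg hi]
            have tri := dist_triangle (ksPos p x a n i) (cfg n i) (cfg (n+1) i)
            simp only [dist_self]
            linarith
        have hsum := Finset.sum_le_sum (fun i (_ : i ∈ Finset.univ) => per i)
        rw [Finset.sum_add_distrib, Finset.sum_add_distrib] at hsum
        have hih := ih hn'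
        rw [← Finset.insert_Icc_right_eq_Icc_add_one (by omega : 1 ≤ n+1),
          Finset.sum_insert (by simp [Finset.mem_Icc] : n+1 ∉ Finset.Icc 1 n),
          Finset.sum_insert (by simp [Finset.mem_Icc] : n+1 ∉ Finset.Icc 1 n)]
        simp only [Nat.add_sub_cancel]
        linarith
  have h := key T le_rfl
  have h2 : 0 ≤ ∑ i, dist (ksPos p x a T i) (cfg T i) :=
    Finset.sum_nonneg fun _ _ => dist_nonneg
  unfold ksCost
  linarith

/-- Lower bound on the cost via block-good requests. -/
lemma ksCost_lower (p : Fin k → X) (x : ℕ → X) (a : ℕ → Fin k) (T L : ℕ) {δ : ℝ}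
    (hδ : 0 ≤ δ) (good : Finset ℕ)
    (hG : ∀ t ∈ good, t ∈ Finset.Icc 1 T ∧ ∀ s, 1 ≤ s → s < t →
          (s-1)/L = (t-1)/L → δ ≤ dist (x s) (x t)) :
    δ * ((good.card : ℝ) - (k * ((T-1)/L + 1) : ℕ)) ≤ ksCost p x a T := by

  letI : DecidablePred (fun t => ∀ s, 1 ≤ s → s < t →
      (s-1)/L = (t-1)/L → a s ≠ a t) := fun t => Classical.propDecidable _
  set fst := good.filter (fun t => ∀ s, 1 ≤ s → s < t →
      (s-1)/L = (t-1)/L → a s ≠ a t) with hfst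
  have hfstsub : fst ⊆ good := Finset.filter_subset _ _
  have hgoodsub : ∀ {t}, t ∈ good → t ∈ Finset.Icc 1 T := fun ht => (hG _ ht).1
  have hfstcard : fst.card ≤ k * ((T-1)/L + 1) := by
    have hc : fst.card ≤ (Finset.univ ×ˢ Finset.range ((T-1)/L + 1) :
        Finset (Fin k × ℕ)).card := by
      apply Finset.card_le_card_of_injOn (fun t => (a t, (t-1)/L))
      · intro t htf
        have ht := Finset.mem_Icc.mp (hgoodsub (hfstsub htf))
        refine Finset.mem_product.mpr ⟨Finset.mem_univ _, Finset.mem_range.mpr ?_⟩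
        have : (t-1)/L ≤ (T-1)/L := Nat.div_le_div_right (by omega)
        dsimp only
        omega
      · intro t ht t' ht' heq
        have h1 := Finset.mem_filter.mp (Finset.mem_coe.mp ht)
        have h2 := Finset.mem_filter.mp (Finset.mem_coe.mp ht')
        have hI1 := Finset.mem_Icc.mp (hgoodsub h1.1)
        have hI2 := Finset.mem_Icc.mp (hgoodsub h2.1)
        have hat : a t = a t' := congrArg Prod.fst heq
        have hblk : (t-1)/L = (t'-1)/L := congrArg Prod.snd heq
        by_contra hne
        rcases Nat.lt_or_ge t t' with hlt | hge
        · exact h2.2 t hI1.1 hlt hblk hat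
        · exact h1.2 t' hI2.1 (by omega) hblk.symm hat.symm
    rwa [Finset.card_product, Finset.card_univ, Fintype.card_fin,
      Finset.card_range] at hc
  set D := good \ fst with hD
  have hstep : ∀ t ∈ D, δ ≤ dist (ksPos p x a (t-1) (a t)) (x t) := by
    intro t htD
    have htg := Finset.mem_sdiff.mp htD
    have htI := Finset.mem_Icc.mp (hgoodsub htg.1)
    have hgp := (hG _ htg.1).2
    have hnf : ¬ (∀ s, 1 ≤ s → s < t → (s-1)/L = (t-1)/L → a s ≠ a t) :=
      fun hcon => htg.2 (Finset.mem_filter.mpr ⟨htg.1, hcon⟩)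
    push_neg at hnf
    obtain ⟨s, hs1, hst, hsblk, hsa⟩ := hnf
    set W := (Finset.Icc 1 (t-1)).filter (fun u => a u = a t) with hW
    have hsW : s ∈ W := Finset.mem_filter.mpr ⟨Finset.mem_Icc.mpr ⟨hs1, by omega⟩, hsa⟩
    have hWne : W.Nonempty := ⟨s, hsW⟩
    have huW := W.max'_mem hWne
    set u := W.max' hWne with hu
    have huI := Finset.mem_Icc.mp (Finset.mem_filter.mp huW).1
    have hua : a u = a t := (Finset.mem_filter.mp huW).2
    have hsu : s ≤ u := W.le_max' s hsW
    have hpos : ksPos p x a (t-1) (a t) = x u := by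
      apply ksPos_eq_of_last p x a huI.1 huI.2 hua
      intro v hv1 hv2 hva
      have hvW : v ∈ W := Finset.mem_filter.mpr ⟨Finset.mem_Icc.mpr ⟨by omega, hv2⟩, hva⟩
      have := W.le_max' v hvW
      omega
    have hublk : (u-1)/L = (t-1)/L := by
      have h1 : (s-1)/L ≤ (u-1)/L := Nat.div_le_div_right (by omega)
      have h2 : (u-1)/L ≤ (t-1)/L := Nat.div_le_div_right (by omega)
      omega
    rw [hpos]
    exact hgp u huI.1 (by omega) hublk
  have hDsub : D ⊆ Finset.Icc 1 T := fun t ht => hgoodsub (Finset.mem_sdiff.mp ht).1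
  have hsum : δ * D.card ≤ ksCost p x a T := by
    rw [ksCost_eq]
    calc δ * D.card = ∑ _t ∈ D, δ := by rw [Finset.sum_const, nsmul_eq_mul]; ring
    _ ≤ ∑ t ∈ D, dist (ksPos p x a (t-1) (a t)) (x t) := Finset.sum_le_sum hstep
    _ ≤ ∑ t ∈ Finset.Icc 1 T, dist (ksPos p x a (t-1) (a t)) (x t) :=
        Finset.sum_le_sum_of_subset_of_nonneg hDsub (fun _ _ _ => dist_nonneg)
  have hDcard : (good.card : ℝ) - (k * ((T-1)/L + 1) : ℕ) ≤ D.card := by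
    have h1 : D.card = good.card - fst.card := Finset.card_sdiff_of_subset hfstsub
    have h2 : fst.card ≤ good.card := Finset.card_le_card hfstsub
    have h3 : (D.card : ℝ) = (good.card : ℝ) - fst.card := by
      rw [h1, Nat.cast_sub h2]
    have h4 : (fst.card : ℝ) ≤ ((k * ((T-1)/L + 1) : ℕ) : ℝ) := Nat.cast_le.mpr hfstcard
    linarith
  calc δ * ((good.card : ℝ) - (k * ((T-1)/L + 1) : ℕ)) ≤ δ * D.card :=
        mul_le_mul_of_nonneg_left hDcard hδ
  _ ≤ ksCost p x a T := hsum

lemma ksPos_dist_le (p : Fin k → X) (x : ℕ → X) (a : ℕ → Fin k) (cc : X) (Rad M : ℝ)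
    (hp : ∀ i, dist (p i) cc ≤ M) :
    ∀ n, (∀ t, 1 ≤ t → t ≤ n → dist (x t) cc ≤ Rad) →
      ∀ i, dist (ksPos p x a n i) cc ≤ max Rad M := by
  intro n
  induction n with
  | zero => intro _ i; exact le_trans (hp i) (le_max_right _ _)
  | succ n ih =>
      intro hx i
      rw [ksPos_succ]
      by_cases h : a (n+1) = i
      · rw [if_pos h]; exact le_trans (hx (n+1) (by omega) le_rfl) (le_max_left _ _)
      · rw [if_neg h]; exact ih (fun t ht htn => hx t ht (by omega)) i

lemma ksCost_le_bound (p : Fin k → X) (x : ℕ → X) (a : ℕ → Fin k) (T : ℕ) (cc : X)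
    (Rad M : ℝ) (hp : ∀ i, dist (p i) cc ≤ M)
    (hx : ∀ t, 1 ≤ t → t ≤ T → dist (x t) cc ≤ Rad) :
    ksCost p x a T ≤ T * (max Rad M + Rad) := by
  rw [ksCost_eq]
  have hb : ∀ t ∈ Finset.Icc 1 T, dist (ksPos p x a (t-1) (a t)) (x t) ≤ max Rad M + Rad := by
    intro t ht
    rw [Finset.mem_Icc] at ht
    have h1 : dist (ksPos p x a (t-1) (a t)) cc ≤ max Rad M :=
      ksPos_dist_le p x a cc Rad M hp (t-1) (fun u hu hun => hx u hu (by omega)) _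
    have h2 : dist (x t) cc ≤ Rad := hx t ht.1 ht.2
    have tri := dist_triangle (ksPos p x a (t-1) (a t)) cc (x t)
    have hcomm : dist cc (x t) = dist (x t) cc := dist_comm _ _
    linarith
  calc ∑ t ∈ Finset.Icc 1 T, dist (ksPos p x a (t-1) (a t)) (x t)
      ≤ ∑ _t ∈ Finset.Icc 1 T, (max Rad M + Rad) := Finset.sum_le_sum hb
  _ = T * (max Rad M + Rad) := by
      rw [Finset.sum_const, Nat.card_Icc, nsmul_eq_mul]
      norm_num

lemma measurable_finset_inf' {Ω ι : Type*} [MeasurableSpace Ω] {s : Finset ι}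
    (hs : s.Nonempty) (f : ι → Ω → ℝ) (hf : ∀ i, Measurable (f i)) :
    Measurable fun ω => s.inf' hs fun i => f i ω := by
  induction hs using Finset.Nonempty.cons_induction with
  | singleton i => simp only [Finset.inf'_singleton]; exact hf i
  | cons i s hi hs ih =>
      have : (fun ω => (Finset.cons i s hi).inf' (Finset.cons_nonempty hi) fun j => f j ω)
          = fun ω => f i ω ⊓ s.inf' hs fun j => f j ω := by
        funext ω; exact Finset.inf'_cons hs (fun j => f j ω)
      rw [this]
      exact (hf i).min ih

end KSAux

set_option maxHeartbeats 1600000 in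
/-- Lemma 3.1 of the paper, deterministic horizon `T`.
Let `E` be a real normed vector space of finite dimension `m ≥ 1`, let `B = closedBall c R`
with `R > 0`, `σ ∈ (0,1]`, `k ≥ 1`, and set `δ = R·(σ/(8k))^{1/m}`. Suppose the requests
`r 1, …, r T ∈ B` are generated adaptively so that for each `t` the conditional distribution
of `r t` given the past (encoded by a filtration `F` to which the requests are adapted) is
almost surely `σ`-smooth with respect to `B`: for every measurable `S ⊆ B`, the conditional
probability that `r t ∈ S` given `F (t-1)` is a.s. at most `vol S / (σ · vol B)`. Then for
every initial configuration `c₀ : Fin k → E`, the expected optimal offline `k`-server cost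
is at least `(δ/8)·T - (k·δ)/2`. -/
theorem kserver_smoothed_opt_lower_bound
    {E : Type*} [NormedAddCommGroup E] [NormedSpace ℝ E]
    [MeasurableSpace E] [BorelSpace E] [FiniteDimensional ℝ E]
    {m : ℕ} (hm : 1 ≤ m) (hdim : Module.finrank ℝ E = m)
    (vol : Measure E) [vol.IsAddHaarMeasure]
    (c : E) {R : ℝ} (hR : 0 < R) {σ : ℝ} (hσ0 : 0 < σ) (hσ1 : σ ≤ 1)
    {k : ℕ} (hk : 1 ≤ k) {δ : ℝ} (hδ : δ = R * (σ / (8 * k)) ^ ((1 : ℝ) / m))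
    {Ω : Type*} {m0 : MeasurableSpace Ω} (P : Measure Ω) [IsProbabilityMeasure P]
    (T : ℕ) (F : Filtration ℕ m0) (r : ℕ → Ω → E)
    (hadapted : ∀ t ∈ Finset.Icc 1 T, Measurable[F t] (r t))
    (hsupp : ∀ t ∈ Finset.Icc 1 T, ∀ᵐ ω ∂P, r t ω ∈ closedBall c R)
    (hsmooth : ∀ t ∈ Finset.Icc 1 T, ∀ S : Set E, S ⊆ closedBall c R → MeasurableSet S →
      ∀ᵐ ω ∂P,
        (P[fun ω' => S.indicator (fun _ => (1 : ℝ)) (r t ω') | F (t - 1)]) ω ≤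
          (vol S).toReal / (σ * (vol (closedBall c R)).toReal))
    (c₀ : Fin k → E) :
    (δ / 8) * T - (k * δ) / 2 ≤
      ∫ ω, sInf {x : ℝ | ∃ cfg : ℕ → Fin k → E, cfg 0 = c₀ ∧
        (∀ t ∈ Finset.Icc 1 T, ∃ i, cfg t i = r t ω) ∧
        x = ∑ t ∈ Finset.Icc 1 T, ∑ i, dist (cfg (t - 1) i) (cfg t i)} ∂P := by
  classical
  haveI : Nonempty (Fin k) := ⟨⟨0, hk⟩⟩
  have hk0 : (0:ℝ) < k := by exact_mod_cast (by omega : 0 < k)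
  have hm1 : (1:ℝ) ≤ m := by exact_mod_cast hm
  have hknz : (k:ℝ) ≠ 0 := ne_of_gt hk0
  have hm0 : (0:ℝ) < m := by exact_mod_cast (by omega : 0 < m)
  have hsk : (0:ℝ) < σ / (8 * k) := div_pos hσ0 (by nlinarith)
  have hδpos : 0 < δ := by
    rw [hδ]; exact mul_pos hR (Real.rpow_pos_of_pos hsk _)
  have hrmeas : ∀ t ∈ Finset.Icc 1 T, Measurable (r t) := fun t ht =>
    (hadapted t ht).mono (F.le t) le_rfl
  set L : ℕ := 3 * k with hLdef
  set i0 : Fin k := ⟨0, hk⟩ with hi0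
  set exta : (Fin T → Fin k) → ℕ → Fin k :=
    fun b t => if h : 1 ≤ t ∧ t ≤ T then b ⟨t-1, by omega⟩ else i0 with hexta
  set O : Ω → ℝ := fun ω =>
    (Finset.univ : Finset (Fin T → Fin k)).inf' Finset.univ_nonempty
      (fun b => ksCost c₀ (fun u => r u ω) (exta b) T) with hO
  -- Step 1 : the pointwise identification of the infimum.
  have hSinf : ∀ ω, sInf {x : ℝ | ∃ cfg : ℕ → Fin k → E, cfg 0 = c₀ ∧
        (∀ t ∈ Finset.Icc 1 T, ∃ i, cfg t i = r t ω) ∧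
        x = ∑ t ∈ Finset.Icc 1 T, ∑ i, dist (cfg (t - 1) i) (cfg t i)} = O ω := by
    intro ω
    have hlb : ∀ y ∈ {x : ℝ | ∃ cfg : ℕ → Fin k → E, cfg 0 = c₀ ∧
        (∀ t ∈ Finset.Icc 1 T, ∃ i, cfg t i = r t ω) ∧
        x = ∑ t ∈ Finset.Icc 1 T, ∑ i, dist (cfg (t - 1) i) (cfg t i)}, O ω ≤ y := by
      rintro y ⟨cfg, hc0, hserve, rfl⟩
      set b : Fin T → Fin k := fun j => (hserve ((j:ℕ)+1)
        (Finset.mem_Icc.mpr ⟨Nat.succ_le_succ (Nat.zero_le _), j.isLt⟩)).choose with hb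
      have hserve' : ∀ t ∈ Finset.Icc 1 T, cfg t (exta b t) = r t ω := by
        intro t ht
        rw [Finset.mem_Icc] at ht
        obtain ⟨n, rfl⟩ : ∃ n, t = n + 1 := ⟨t-1, by omega⟩
        have h12 : 1 ≤ n+1 ∧ n+1 ≤ T := ⟨by omega, ht.2⟩
        have he : exta b (n+1) = b ⟨n, by omega⟩ := dif_pos h12
        rw [he]
        exact (hserve (n+1) (Finset.mem_Icc.mpr ⟨by omega, ht.2⟩)).choose_spec
      calc O ω ≤ ksCost c₀ (fun u => r u ω) (exta b) T :=
            Finset.inf'_le _ (Finset.mem_univ b)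
      _ ≤ ∑ t ∈ Finset.Icc 1 T, ∑ i, dist (cfg (t - 1) i) (cfg t i) :=
            ksCost_le c₀ (fun u => r u ω) (exta b) T cfg hc0 hserve'
    have hmem : O ω ∈ {x : ℝ | ∃ cfg : ℕ → Fin k → E, cfg 0 = c₀ ∧
        (∀ t ∈ Finset.Icc 1 T, ∃ i, cfg t i = r t ω) ∧
        x = ∑ t ∈ Finset.Icc 1 T, ∑ i, dist (cfg (t - 1) i) (cfg t i)} := by
      obtain ⟨b0, _, hb0⟩ := Finset.exists_mem_eq_inf'
        (Finset.univ_nonempty (α := Fin T → Fin k))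
        (fun b => ksCost c₀ (fun u => r u ω) (exta b) T)
      refine ⟨ksPos c₀ (fun u => r u ω) (exta b0), rfl, ?_, ?_⟩
      · intro t ht
        exact ⟨exta b0 t, ksPos_serve _ _ _ (Finset.mem_Icc.mp ht).1⟩
      · rw [hO]; exact hb0
    exact le_antisymm (csInf_le ⟨O ω, hlb⟩ hmem) (le_csInf ⟨O ω, hmem⟩ hlb)
  -- Step 2 : measurability of O.
  have hposmeas : ∀ (a : ℕ → Fin k) (n : ℕ), n ≤ T → ∀ i,
      Measurable (fun ω => ksPos c₀ (fun u => r u ω) a n i) := by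
    intro a n
    induction n with
    | zero => intro _ i; exact measurable_const
    | succ n ih =>
        intro hn i
        have hr : Measurable (r (n+1)) := hrmeas _ (Finset.mem_Icc.mpr ⟨by omega, hn⟩)
        by_cases h : a (n+1) = i
        · simp only [ksPos_succ, if_pos h]; exact hr
        · simp only [ksPos_succ, if_neg h]; exact ih (by omega) i
  have hOmeas : Measurable O := by
    rw [hO]
    refine measurable_finset_inf' _ _ (fun b => ?_)
    unfold ksCost
    refine Finset.measurable_sum _ (fun t ht => ?_)
    refine Finset.measurable_sum _ (fun i _ => ?_)
    have ht' := Finset.mem_Icc.mp ht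
    exact (hposmeas (exta b) (t-1) (by omega) i).dist (hposmeas (exta b) t ht'.2 i)
  -- Step 3 : nonnegativity and integrability of O.
  have hOnonneg : ∀ ω, 0 ≤ O ω := by
    intro ω; rw [hO]
    exact Finset.le_inf' _ _ (fun b _ => ksCost_nonneg _ _ _ _)
  have haeB : ∀ᵐ ω ∂P, ∀ t ∈ Finset.Icc 1 T, r t ω ∈ closedBall c R := by
    rw [ae_all_iff]
    intro t
    by_cases ht : t ∈ Finset.Icc 1 T
    · filter_upwards [hsupp t ht] with ω h _
      exact h
    · filter_upwards with ω h
      exact absurd h ht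
  set Cb : ℝ := (T:ℝ) * (max R (∑ j, dist (c₀ j) c) + R) with hCb
  have hCbnn : 0 ≤ Cb := by
    rw [hCb]
    have : (0:ℝ) ≤ max R (∑ j, dist (c₀ j) c) := le_trans hR.le (le_max_left _ _)
    positivity
  have hObd : ∀ᵐ ω ∂P, ‖O ω‖ ≤ Cb := by
    filter_upwards [haeB] with ω hω
    have hub : O ω ≤ Cb := by
      rw [hO, hCb]
      refine le_trans (Finset.inf'_le _ (Finset.mem_univ (fun _ => i0))) ?_
      refine ksCost_le_bound c₀ (fun u => r u ω) _ T c R _ ?_ ?_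
      · intro i
        exact Finset.single_le_sum (f := fun j => dist (c₀ j) c)
          (fun j _ => dist_nonneg) (Finset.mem_univ i)
      · intro t h1 h2
        have := hω t (Finset.mem_Icc.mpr ⟨h1, h2⟩)
        rwa [mem_closedBall] at this
    rw [Real.norm_eq_abs, abs_le]
    exact ⟨by linarith [hOnonneg ω], hub⟩
  have hOint : Integrable O P :=
    ⟨hOmeas.aestronglyMeasurable, HasFiniteIntegral.of_bounded hObd⟩
  -- Step 4 : geometric constants.
  set ε : ℝ := 1/(20*m) with hε
  have hεpos : 0 < ε := by
    rw [hε]; exact div_pos one_pos (by nlinarith)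
  have hε20 : (20:ℝ) ≤ 20*m := by nlinarith
  have hεsmall : ε ≤ 1/20 := by
    rw [hε]
    exact one_div_le_one_div_of_le (by norm_num) hε20
  have hδm : δ^m = σ/(8*k) * R^m := by
    rw [hδ, mul_pow, ← Real.rpow_natCast ((σ/(8*k)) ^ ((1:ℝ)/m)) m,
      ← Real.rpow_mul hsk.le, one_div,
      inv_mul_cancel₀ (by exact_mod_cast (by omega : m ≠ 0)), Real.rpow_one]
    ring
  have hpow : (1+ε)^m ≤ 20/19 := by
    have h1 : (19:ℝ)/20 ≤ (1-ε)^m := by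
      have hB := one_add_mul_le_pow (a := -ε) (by nlinarith) m
      have hmε : (m:ℝ) * ε = 1/20 := by
        rw [hε]
        field_simp
      have : (1:ℝ) + (m:ℝ) * -ε = 19/20 := by rw [mul_neg, hmε]; norm_num
      rw [this] at hB
      calc (19:ℝ)/20 ≤ (1 + -ε)^m := hB
      _ = (1-ε)^m := by ring_nf
    have h2 : (1+ε)^m * (1-ε)^m ≤ 1 := by
      rw [← mul_pow]
      have he : (1+ε)*(1-ε) = 1 - ε^2 := by ring
      rw [he]
      exact pow_le_one₀ (by nlinarith) (by nlinarith)
    have h3 : (0:ℝ) ≤ (1+ε)^m := by positivity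
    nlinarith [mul_le_mul_of_nonneg_left h1 h3]
  set cB : ℝ := 20/19 * (1/(8*k)) with hcB
  have hcBnn : 0 ≤ cB := by rw [hcB]; positivity
  have hvolBpos : 0 < (vol (closedBall c R)).toReal :=
    ENNReal.toReal_pos (measure_closedBall_pos vol c hR).ne' measure_closedBall_lt_top.ne
  have hratio : ∀ q : E,
      (vol (closedBall q ((1+ε)*δ) ∩ closedBall c R)).toReal /
        (σ * (vol (closedBall c R)).toReal) ≤ cB := by
    intro q
    have hV0 : 0 < (vol (ball (0:E) 1)).toReal :=
      ENNReal.toReal_pos (measure_ball_pos vol 0 one_pos).ne' measure_ball_lt_top.ne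
    set V : ℝ := (vol (ball (0:E) 1)).toReal with hV
    have hrad : (0:ℝ) ≤ (1+ε)*δ := mul_nonneg (by linarith) hδpos.le
    have hnum : (vol (closedBall q ((1+ε)*δ) ∩ closedBall c R)).toReal ≤ ((1+ε)*δ)^m * V := by
      have h1 : vol (closedBall q ((1+ε)*δ) ∩ closedBall c R) ≤ vol (closedBall q ((1+ε)*δ)) :=
        measure_mono Set.inter_subset_left
      have h2 : vol (closedBall q ((1+ε)*δ))
          = ENNReal.ofReal (((1+ε)*δ)^(Module.finrank ℝ E)) * vol (ball (0:E) 1) :=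
        Measure.addHaar_closedBall vol q hrad
      have h3 : (vol (closedBall q ((1+ε)*δ))).toReal = ((1+ε)*δ)^m * V := by
        rw [h2, hdim, ENNReal.toReal_mul, ENNReal.toReal_ofReal (by positivity)]
      rw [← h3]
      exact ENNReal.toReal_mono measure_closedBall_lt_top.ne h1
    have hden : (vol (closedBall c R)).toReal = R^m * V := by
      rw [Measure.addHaar_closedBall vol c hR.le, hdim, ENNReal.toReal_mul,
        ENNReal.toReal_ofReal (by positivity)]
    rw [hden]
    have hdpos : 0 < σ * (R^m * V) := by positivity
    rw [div_le_iff₀ hdpos]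
    calc (vol (closedBall q ((1+ε)*δ) ∩ closedBall c R)).toReal ≤ ((1+ε)*δ)^m * V := hnum
    _ = (1+ε)^m * (σ/(8*k) * R^m) * V := by rw [mul_pow, hδm]
    _ ≤ 20/19 * (σ/(8*k) * R^m) * V := by
        have hnn : (0:ℝ) ≤ σ/(8*k) * R^m := by positivity
        have := mul_le_mul_of_nonneg_right hpow hnn
        nlinarith [hV0]
    _ = cB * (σ * (R^m * V)) := by rw [hcB]; field_simp
  -- Step 5 : the conditional smoothness estimate for fixed sets.
  have hkey : ∀ t ∈ Finset.Icc 1 T, ∀ S : Set E, MeasurableSet S → S ⊆ closedBall c R →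
      ∀ A : Set Ω, MeasurableSet[F (t-1)] A →
      (P (A ∩ r t ⁻¹' S)).toReal ≤
        (vol S).toReal / (σ * (vol (closedBall c R)).toReal) * (P A).toReal := by
    intro t ht S hSm hSB A hA
    have hpre : MeasurableSet (r t ⁻¹' S) := (hrmeas t ht) hSm
    have hind : (fun ω => S.indicator (fun _ => (1:ℝ)) (r t ω))
        = (r t ⁻¹' S).indicator (fun _ => (1:ℝ)) := by
      funext ω
      by_cases h : r t ω ∈ S
      · rw [Set.indicator_of_mem h]
        exact (Set.indicator_of_mem (Set.mem_preimage.mpr h) (fun _ => (1:ℝ))).symm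
      · rw [Set.indicator_of_notMem h]
        exact (Set.indicator_of_notMem (fun hc => h (Set.mem_preimage.mp hc)) (fun _ => (1:ℝ))).symm
    have hintg : Integrable (fun ω => S.indicator (fun _ => (1:ℝ)) (r t ω)) P := by
      rw [hind]; exact (integrable_const 1).indicator hpre
    have h1 : ∫ ω in A, S.indicator (fun _ => (1:ℝ)) (r t ω) ∂P
        = (P (A ∩ r t ⁻¹' S)).toReal := by
      rw [hind, MeasureTheory.integral_indicator_const (1:ℝ) hpre, measureReal_def,
        Measure.restrict_apply hpre, Set.inter_comm, smul_eq_mul, mul_one]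
    have h2 := MeasureTheory.setIntegral_condExp (F.le (t-1)) hintg hA
    have h3 : ∫ ω in A, (P[fun ω' => S.indicator (fun _ => (1:ℝ)) (r t ω') | F (t-1)]) ω ∂P
        ≤ ∫ _ω in A, (vol S).toReal / (σ * (vol (closedBall c R)).toReal) ∂P :=
      setIntegral_mono_ae integrable_condExp.integrableOn
        ((integrableOn_const_iff).mpr (Or.inr (measure_lt_top _ _)))
        (hsmooth t ht S hSB hSm)
    rw [setIntegral_const, smul_eq_mul, measureReal_def] at h3
    calc (P (A ∩ r t ⁻¹' S)).toReal
        = ∫ ω in A, (P[fun ω' => S.indicator (fun _ => (1:ℝ)) (r t ω') | F (t-1)]) ω ∂P := by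
          rw [h2, h1]
    _ ≤ (P A).toReal * ((vol S).toReal / (σ * (vol (closedBall c R)).toReal)) := h3
    _ = (vol S).toReal / (σ * (vol (closedBall c R)).toReal) * (P A).toReal := mul_comm _ _
  -- Step 6 : the pairwise anti-concentration bound.
  have hpair : ∀ t ∈ Finset.Icc 1 T, ∀ s ∈ Finset.Icc 1 T, s < t →
      (P {ω | dist (r s ω) (r t ω) < δ}).toReal ≤ cB := by
    intro t ht s hs hst
    have hrs := hrmeas s hs
    have hrt := hrmeas t ht
    have hrsF : Measurable[F (t-1)] (r s) := by
      refine (hadapted s hs).mono (F.mono ?_) le_rfl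
      have := Finset.mem_Icc.mp hs
      omega
    obtain ⟨Q0, hQfin, hQcov⟩ := (Metric.totallyBounded_iff.mp
      (isCompact_closedBall c R).totallyBounded) (ε*δ) (by positivity)
    set Q : Finset E := hQfin.toFinset with hQ
    have hQcov' : ∀ y ∈ closedBall c R, ∃ q ∈ Q, y ∈ ball q (ε*δ) := by
      intro y hy
      have := hQcov hy
      simp only [Set.mem_iUnion] at this
      obtain ⟨q, hq, hyq⟩ := this
      exact ⟨q, hQfin.mem_toFinset.mpr hq, hyq⟩
    set Dlt : Set Ω := {ω | dist (r s ω) (r t ω) < δ} with hDlt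
    have claim : ∀ Q' : Finset E,
        (P (r s ⁻¹' (closedBall c R ∩ ⋃ q ∈ Q', ball q (ε*δ)) ∩ Dlt)).toReal ≤
          cB * (P (r s ⁻¹' (closedBall c R ∩ ⋃ q ∈ Q', ball q (ε*δ)))).toReal := by
      intro Q'
      induction Q' using Finset.induction_on with
      | empty =>
          have he : closedBall c R ∩ ⋃ q ∈ (∅:Finset E), ball q (ε*δ) = (∅: Set E) := by
            simp
          rw [he]
          simp
      | @insert q Q' hq ih =>
          set U : Set E := closedBall c R ∩ ⋃ q' ∈ Q', ball q' (ε*δ) with hU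
          set U' : Set E := closedBall c R ∩ ⋃ q' ∈ insert q Q', ball q' (ε*δ) with hU'
          have hUm : MeasurableSet U :=
            measurableSet_closedBall.inter
              (MeasurableSet.biUnion Q'.countable_toSet (fun _ _ => measurableSet_ball))
          have hU'm : MeasurableSet U' :=
            measurableSet_closedBall.inter
              (MeasurableSet.biUnion (insert q Q').countable_toSet
                (fun _ _ => measurableSet_ball))
          have hUsub : U ⊆ U' := by
            refine Set.inter_subset_inter_right _ ?_
            intro y hy
            simp only [Set.mem_iUnion] at hy ⊢
            obtain ⟨q', hq', hyq'⟩ := hy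
            exact ⟨q', Finset.mem_insert_of_mem hq', hyq'⟩
          have hdisj : Disjoint (r s ⁻¹' (U' \ U)) (r s ⁻¹' U) :=
            (Set.disjoint_sdiff_left).preimage _
          have hPsplit : P (r s ⁻¹' U') = P (r s ⁻¹' (U' \ U)) + P (r s ⁻¹' U) := by
            rw [show r s ⁻¹' U' = r s ⁻¹' (U' \ U) ∪ r s ⁻¹' U by
              rw [← Set.preimage_union, Set.diff_union_of_subset hUsub]]
            exact measure_union hdisj (hrs hUm)
          set Sq : Set E := closedBall q ((1+ε)*δ) ∩ closedBall c R with hSq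
          have hsub1 : (r s ⁻¹' (U' \ U)) ∩ Dlt ⊆
              ((r s ⁻¹' (U' \ U)) ∩ r t ⁻¹' Sq) ∪ {ω | r t ω ∉ closedBall c R} := by
            intro ω hω
            by_cases hBm : r t ω ∈ closedBall c R
            · left
              refine ⟨hω.1, ?_, hBm⟩
              have hball : r s ω ∈ ball q (ε*δ) := by
                obtain ⟨⟨hBs, hUn⟩, hnotU⟩ := hω.1
                simp only [Set.mem_iUnion] at hUn
                obtain ⟨q', hq', hyq'⟩ := hUn
                rcases Finset.mem_insert.mp hq' with h | hq'Q
                · rw [← h]; exact hyq'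
                · exact absurd ⟨hBs, by
                    simp only [Set.mem_iUnion]; exact ⟨q', hq'Q, hyq'⟩⟩ hnotU
              have h3 : dist (r s ω) (r t ω) < δ := hω.2
              have h4 : dist (r s ω) q < ε*δ := mem_ball.mp hball
              have h5 : dist (r t ω) q ≤ (1+ε)*δ := by
                have tri := dist_triangle (r t ω) (r s ω) q
                have hco : dist (r t ω) (r s ω) = dist (r s ω) (r t ω) := dist_comm _ _
                nlinarith
              exact mem_closedBall.mpr h5
            · right; exact hBm
          have hnull : P {ω | r t ω ∉ closedBall c R} = 0 := by
            have := hsupp t ht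
            rwa [ae_iff] at this
          have hA : MeasurableSet[F (t-1)] (r s ⁻¹' (U' \ U)) := hrsF (hU'm.diff hUm)
          have h5 : (P ((r s ⁻¹' (U' \ U)) ∩ Dlt)).toReal ≤
              cB * (P (r s ⁻¹' (U' \ U))).toReal := by
            have h6 : P ((r s ⁻¹' (U' \ U)) ∩ Dlt) ≤ P ((r s ⁻¹' (U' \ U)) ∩ r t ⁻¹' Sq) := by
              calc P ((r s ⁻¹' (U' \ U)) ∩ Dlt)
                  ≤ P (((r s ⁻¹' (U' \ U)) ∩ r t ⁻¹' Sq) ∪ {ω | r t ω ∉ closedBall c R}) :=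
                    measure_mono hsub1
              _ ≤ P ((r s ⁻¹' (U' \ U)) ∩ r t ⁻¹' Sq) + P {ω | r t ω ∉ closedBall c R} :=
                    measure_union_le _ _
              _ = P ((r s ⁻¹' (U' \ U)) ∩ r t ⁻¹' Sq) := by rw [hnull, add_zero]
            have h7 := hkey t ht Sq (measurableSet_closedBall.inter measurableSet_closedBall)
              Set.inter_subset_right (r s ⁻¹' (U' \ U)) hA
            have h8 : (P ((r s ⁻¹' (U' \ U)) ∩ Dlt)).toReal ≤
                (P ((r s ⁻¹' (U' \ U)) ∩ r t ⁻¹' Sq)).toReal :=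
              ENNReal.toReal_mono (measure_ne_top P _) h6
            have h9 : (vol Sq).toReal / (σ * (vol (closedBall c R)).toReal) ≤ cB := hratio q
            have h10 : (0:ℝ) ≤ (P (r s ⁻¹' (U' \ U))).toReal := ENNReal.toReal_nonneg
            nlinarith [h7]
          have hEsub : (r s ⁻¹' U') ∩ Dlt ⊆
              ((r s ⁻¹' (U' \ U)) ∩ Dlt) ∪ ((r s ⁻¹' U) ∩ Dlt) := by
            intro ω hω
            by_cases h : r s ω ∈ U
            · right; exact ⟨h, hω.2⟩
            · left; exact ⟨⟨hω.1, h⟩, hω.2⟩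
          have hfin : (P ((r s ⁻¹' U') ∩ Dlt)).toReal ≤
              (P ((r s ⁻¹' (U' \ U)) ∩ Dlt)).toReal + (P ((r s ⁻¹' U) ∩ Dlt)).toReal := by
            calc (P ((r s ⁻¹' U') ∩ Dlt)).toReal
                ≤ (P (((r s ⁻¹' (U' \ U)) ∩ Dlt) ∪ ((r s ⁻¹' U) ∩ Dlt))).toReal :=
                  ENNReal.toReal_mono (measure_ne_top P _) (measure_mono hEsub)
            _ ≤ ((P ((r s ⁻¹' (U' \ U)) ∩ Dlt)) + (P ((r s ⁻¹' U) ∩ Dlt))).toReal :=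
                  ENNReal.toReal_mono (by
                    exact ENNReal.add_ne_top.mpr ⟨measure_ne_top P _, measure_ne_top P _⟩)
                    (measure_union_le _ _)
            _ = _ := ENNReal.toReal_add (measure_ne_top P _) (measure_ne_top P _)
          have hPsplit' : (P (r s ⁻¹' U')).toReal
              = (P (r s ⁻¹' (U' \ U))).toReal + (P (r s ⁻¹' U)).toReal := by
            rw [hPsplit]
            exact ENNReal.toReal_add (measure_ne_top P _) (measure_ne_top P _)
          rw [hPsplit']
          calc (P ((r s ⁻¹' U') ∩ Dlt)).toReal
              ≤ (P ((r s ⁻¹' (U' \ U)) ∩ Dlt)).toReal + (P ((r s ⁻¹' U) ∩ Dlt)).toReal := hfin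
          _ ≤ cB * (P (r s ⁻¹' (U' \ U))).toReal + cB * (P (r s ⁻¹' U)).toReal := by
              have := ih
              linarith [h5]
          _ = cB * ((P (r s ⁻¹' (U' \ U))).toReal + (P (r s ⁻¹' U)).toReal) := by ring
    -- wrap up using the cover.
    have hcov2 : Dlt ⊆ (r s ⁻¹' (closedBall c R ∩ ⋃ q ∈ Q, ball q (ε*δ)) ∩ Dlt)
        ∪ {ω | r s ω ∉ closedBall c R} := by
      intro ω hω
      by_cases h : r s ω ∈ closedBall c R
      · left
        refine ⟨⟨h, ?_⟩, hω⟩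
        obtain ⟨q, hqQ, hqb⟩ := hQcov' _ h
        simp only [Set.mem_iUnion]
        exact ⟨q, hqQ, hqb⟩
      · right; exact h
    have hnulls : P {ω | r s ω ∉ closedBall c R} = 0 := by
      have := hsupp s hs
      rwa [ae_iff] at this
    have h11 : (P Dlt).toReal ≤
        (P (r s ⁻¹' (closedBall c R ∩ ⋃ q ∈ Q, ball q (ε*δ)) ∩ Dlt)).toReal := by
      refine ENNReal.toReal_mono (measure_ne_top P _) ?_
      calc P Dlt ≤ P ((r s ⁻¹' (closedBall c R ∩ ⋃ q ∈ Q, ball q (ε*δ)) ∩ Dlt)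
          ∪ {ω | r s ω ∉ closedBall c R}) := measure_mono hcov2
      _ ≤ _ + P {ω | r s ω ∉ closedBall c R} := measure_union_le _ _
      _ = _ := by rw [hnulls, add_zero]
    have h12 := claim Q
    have h13 : (P (r s ⁻¹' (closedBall c R ∩ ⋃ q ∈ Q, ball q (ε*δ)))).toReal ≤ 1 := by
      calc (P _).toReal ≤ (P Set.univ).toReal :=
            ENNReal.toReal_mono (measure_ne_top P _) (measure_mono (Set.subset_univ _))
      _ = 1 := by rw [measure_univ, ENNReal.toReal_one]
    nlinarith [h11, h12, h13]
  -- Step 7 : good events have large probability.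
  letI dInst : ∀ (ω : Ω), DecidablePred (fun t => ∀ s, 1 ≤ s → s < t →
      (s-1)/L = (t-1)/L → δ ≤ dist (r s ω) (r t ω)) :=
    fun _ _ => Classical.propDecidable _
  set goodEv : ℕ → Set Ω := fun t => {ω | ∀ s, 1 ≤ s → s < t →
      (s-1)/L = (t-1)/L → δ ≤ dist (r s ω) (r t ω)} with hgoodEv
  have hgoodmeas : ∀ t ∈ Finset.Icc 1 T, MeasurableSet (goodEv t) := by
    intro t ht
    have heq : goodEv t = ⋂ (s : ℕ), {ω | 1 ≤ s → s < t →
        (s-1)/L = (t-1)/L → δ ≤ dist (r s ω) (r t ω)} := by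
      ext ω
      simp only [hgoodEv, Set.mem_setOf_eq, Set.mem_iInter]
    rw [heq]
    refine MeasurableSet.iInter fun s => ?_
    by_cases h1 : 1 ≤ s ∧ s < t ∧ (s-1)/L = (t-1)/L
    · have hs : Measurable (r s) := by
        refine hrmeas s (Finset.mem_Icc.mpr ⟨h1.1, ?_⟩)
        have := (Finset.mem_Icc.mp ht).2
        omega
      have hmt : Measurable (r t) := hrmeas t ht
      have he2 : {ω : Ω | 1 ≤ s → s < t → (s-1)/L = (t-1)/L → δ ≤ dist (r s ω) (r t ω)}
          = {ω | δ ≤ dist (r s ω) (r t ω)} := by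
        ext ω
        simp only [Set.mem_setOf_eq]
        constructor
        · intro h; exact h h1.1 h1.2.1 h1.2.2
        · intro h _ _ _; exact h
      rw [he2]
      exact measurableSet_le measurable_const (hs.dist hmt)
    · have he2 : {ω : Ω | 1 ≤ s → s < t → (s-1)/L = (t-1)/L → δ ≤ dist (r s ω) (r t ω)}
          = Set.univ := by
        ext ω
        simp only [Set.mem_setOf_eq, Set.mem_univ, iff_true]
        intro hs1 hst hblk
        exact absurd ⟨hs1, hst, hblk⟩ h1
      rw [he2]
      exact MeasurableSet.univ
  have hL0 : 0 < L := by omega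
  have hgoodP : ∀ t ∈ Finset.Icc 1 T, (23:ℝ)/38 ≤ (P (goodEv t)).toReal := by
    intro t ht
    have htI := Finset.mem_Icc.mp ht
    set wnd : Finset ℕ := (Finset.Icc 1 (t-1)).filter (fun s => (s-1)/L = (t-1)/L) with hwnd
    have hwndcard : (wnd.card : ℝ) ≤ 3*(k:ℝ) := by
      have hsubw : wnd ⊆ Finset.Icc (L*((t-1)/L)+1) (t-1) := by
        intro s hsw
        have h1 := Finset.mem_filter.mp hsw
        have h2 := Finset.mem_Icc.mp h1.1
        have h3 : L*((s-1)/L) ≤ s-1 := Nat.mul_div_le _ _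
        rw [Finset.mem_Icc]
        constructor
        · rw [← h1.2]; omega
        · exact h2.2
      have h4 : wnd.card ≤ (Finset.Icc (L*((t-1)/L)+1) (t-1)).card :=
        Finset.card_le_card hsubw
      have h5 : (Finset.Icc (L*((t-1)/L)+1) (t-1)).card = t-1 - L*((t-1)/L) := by
        rw [Nat.card_Icc]; omega
      have h6 : t-1 - L*((t-1)/L) = (t-1) % L := by
        have := Nat.mod_add_div (t-1) L
        omega
      have h7 : (t-1) % L < L := Nat.mod_lt _ hL0
      have h8 : wnd.card ≤ L := by omega
      calc (wnd.card : ℝ) ≤ (L:ℝ) := by exact_mod_cast h8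
      _ = 3*(k:ℝ) := by rw [hLdef]; push_cast; ring
    have hcompl : (goodEv t)ᶜ ⊆ ⋃ s ∈ wnd, {ω | dist (r s ω) (r t ω) < δ} := by
      intro ω hω
      simp only [hgoodEv, Set.mem_compl_iff, Set.mem_setOf_eq] at hω
      push_neg at hω
      obtain ⟨s, hs1, hst, hblk, hlt⟩ := hω
      refine Set.mem_biUnion ?_ hlt
      exact Finset.mem_filter.mpr ⟨Finset.mem_Icc.mpr ⟨hs1, by omega⟩, hblk⟩
    have hPc : (P ((goodEv t)ᶜ)).toReal ≤ 15/38 := by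
      have h1 : P ((goodEv t)ᶜ) ≤ ∑ s ∈ wnd, P {ω | dist (r s ω) (r t ω) < δ} :=
        le_trans (measure_mono hcompl) (measure_biUnion_finset_le _ _)
      have h2 : (P ((goodEv t)ᶜ)).toReal ≤ ∑ s ∈ wnd, (P {ω | dist (r s ω) (r t ω) < δ}).toReal := by
        calc (P ((goodEv t)ᶜ)).toReal
            ≤ (∑ s ∈ wnd, P {ω | dist (r s ω) (r t ω) < δ}).toReal :=
              ENNReal.toReal_mono (by
                refine (ENNReal.sum_lt_top.mpr ?_).ne
                intro s _
                exact measure_lt_top _ _) h1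
        _ = ∑ s ∈ wnd, (P {ω | dist (r s ω) (r t ω) < δ}).toReal :=
              ENNReal.toReal_sum (fun s _ => measure_ne_top _ _)
      have h3 : ∑ s ∈ wnd, (P {ω | dist (r s ω) (r t ω) < δ}).toReal ≤ (wnd.card : ℝ) * cB := by
        calc ∑ s ∈ wnd, (P {ω | dist (r s ω) (r t ω) < δ}).toReal
            ≤ ∑ _s ∈ wnd, cB := by
              refine Finset.sum_le_sum (fun s hsw => ?_)
              have h4 := Finset.mem_Icc.mp (Finset.mem_filter.mp hsw).1
              exact hpair t ht s (Finset.mem_Icc.mpr ⟨h4.1, by omega⟩) (by omega)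
        _ = (wnd.card : ℝ) * cB := by rw [Finset.sum_const, nsmul_eq_mul]
      have h5 : (wnd.card : ℝ) * cB ≤ 3*(k:ℝ) * cB := mul_le_mul_of_nonneg_right hwndcard hcBnn
      have h6 : 3*(k:ℝ) * cB = 15/38 := by
        rw [hcB]; field_simp; ring
      linarith
    have h7 : (1:ℝ) ≤ (P (goodEv t)).toReal + (P ((goodEv t)ᶜ)).toReal := by
      have h8 : P Set.univ ≤ P (goodEv t) + P ((goodEv t)ᶜ) := by
        rw [← Set.union_compl_self (goodEv t)]
        exact measure_union_le _ _
      have h9 : (P Set.univ).toReal ≤ (P (goodEv t) + P ((goodEv t)ᶜ)).toReal :=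
        ENNReal.toReal_mono
          (ENNReal.add_ne_top.mpr ⟨measure_ne_top _ _, measure_ne_top _ _⟩) h8
      rw [measure_univ, ENNReal.toReal_one] at h9
      rw [← ENNReal.toReal_add (measure_ne_top _ _) (measure_ne_top _ _)]
      exact h9
    linarith
  -- Step 8 : assembling the expectation bound.
  set Gf : Ω → ℝ := fun ω => ∑ t ∈ Finset.Icc 1 T,
    (goodEv t).indicator (fun _ => (1:ℝ)) ω with hGf
  have hGfint : Integrable Gf P := by
    rw [hGf]
    exact integrable_finset_sum _ (fun t ht => (integrable_const 1).indicator (hgoodmeas t ht))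
  have hGfE : (23:ℝ)/38 * T ≤ ∫ ω, Gf ω ∂P := by
    have h1 : ∫ ω, Gf ω ∂P = ∑ t ∈ Finset.Icc 1 T, (P (goodEv t)).toReal := by
      rw [hGf, integral_finset_sum _
        (fun t ht => (integrable_const 1).indicator (hgoodmeas t ht))]
      refine Finset.sum_congr rfl fun t ht => ?_
      rw [MeasureTheory.integral_indicator_const (1:ℝ) (hgoodmeas t ht), measureReal_def, smul_eq_mul, mul_one]
    rw [h1]
    calc (23:ℝ)/38 * T = ∑ _t ∈ Finset.Icc 1 T, (23:ℝ)/38 := by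
          rw [Finset.sum_const, Nat.card_Icc, Nat.add_sub_cancel, nsmul_eq_mul, mul_comm]
    _ ≤ ∑ t ∈ Finset.Icc 1 T, (P (goodEv t)).toReal := Finset.sum_le_sum hgoodP
  set KB : ℕ := k * ((T-1)/L + 1) with hKB
  have hOlow : ∀ ω, δ * (Gf ω - (KB:ℝ)) ≤ O ω := by
    intro ω
    rw [hO]
    refine Finset.le_inf' _ _ (fun b _ => ?_)
    have hcard : Gf ω = (((Finset.Icc 1 T).filter (fun t => ∀ s, 1 ≤ s → s < t →
        (s-1)/L = (t-1)/L → δ ≤ dist (r s ω) (r t ω))).card : ℝ) := by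
      rw [hGf, Finset.card_filter]
      push_cast
      refine Finset.sum_congr rfl fun t _ => ?_
      by_cases hgt : ω ∈ goodEv t
      · rw [Set.indicator_of_mem hgt, if_pos]
        exact hgt
      · rw [Set.indicator_of_notMem hgt, if_neg]
        exact hgt
    rw [hcard]
    refine ksCost_lower c₀ (fun u => r u ω) (exta b) T L hδpos.le _ (fun t htm => ?_)
    have h1 := Finset.mem_filter.mp htm
    exact ⟨h1.1, h1.2⟩
  have hInt2 : δ * ((∫ ω, Gf ω ∂P) - (KB:ℝ)) ≤ ∫ ω, O ω ∂P := by
    have h2 : Integrable (fun ω => δ * (Gf ω - (KB:ℝ))) P :=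
      ((hGfint.sub (integrable_const _)).const_mul δ)
    have h3 := integral_mono h2 hOint hOlow
    rwa [MeasureTheory.integral_const_mul, integral_sub hGfint (integrable_const _), integral_const,
      measureReal_def, measure_univ, ENNReal.toReal_one, one_smul] at h3
  have hO0 : 0 ≤ ∫ ω, O ω ∂P := integral_nonneg hOnonneg
  have hIeq : ∫ ω, sInf {x : ℝ | ∃ cfg : ℕ → Fin k → E, cfg 0 = c₀ ∧
        (∀ t ∈ Finset.Icc 1 T, ∃ i, cfg t i = r t ω) ∧
        x = ∑ t ∈ Finset.Icc 1 T, ∑ i, dist (cfg (t - 1) i) (cfg t i)} ∂P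
      = ∫ ω, O ω ∂P :=
    integral_congr_ae (Filter.Eventually.of_forall hSinf)
  rw [hIeq]
  by_cases hT4 : T ≤ 4*k
  · have hTk : (T:ℝ) ≤ 4*(k:ℝ) := by exact_mod_cast hT4
    nlinarith [hδpos.le, hO0]
  · push_neg at hT4
    have hTk : 4*(k:ℝ) + 1 ≤ (T:ℝ) := by exact_mod_cast hT4
    have hKBle : (KB:ℝ) ≤ (T:ℝ)/3 + k := by
      rw [hKB]
      push_cast
      have hc1 : ((((T-1)/L : ℕ)) : ℝ) ≤ (((T-1 : ℕ)):ℝ)/(L:ℝ) := Nat.cast_div_le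
      have hL3 : (L:ℝ) = 3*(k:ℝ) := by rw [hLdef]; push_cast; ring
      have hT1 : (((T-1 : ℕ)):ℝ) ≤ (T:ℝ) := by
        exact_mod_cast Nat.cast_le.mpr (Nat.sub_le T 1)
      rw [hL3] at hc1
      have h2 := mul_le_mul_of_nonneg_left hc1 hk0.le
      have heq2 : (k:ℝ) * ((((T-1 : ℕ)):ℝ)/(3*(k:ℝ))) = (((T-1 : ℕ)):ℝ)/3 := by
        field_simp
      rw [heq2] at h2
      nlinarith
    have hGfKB : δ * ((23:ℝ)/38 * T - ((T:ℝ)/3 + k)) ≤ δ * ((∫ ω, Gf ω ∂P) - (KB:ℝ)) := by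
      refine mul_le_mul_of_nonneg_left ?_ hδpos.le
      linarith
    have harith : (δ / 8) * T - (k * δ) / 2 ≤ δ * ((23:ℝ)/38 * T - ((T:ℝ)/3 + k)) := by
      have hbr : (0:ℝ) ≤ (23:ℝ)/38 * T - ((T:ℝ)/3 + k) - ((1/8)*T - k/2) := by
        linarith
      nlinarith [hδpos.le]
    linarith
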